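/- arXiv:2509.01101 — 4 statements merged into one kernel-verified Lean document; each statement's English description precedes it below -/
import Mathlib

section
/- Let A be a finite-dimensional commutative unital algebra over the complex numbers, graded by an abelian group M, i.e. A = ⊕_{χ ∈ M} A^χ with A^χ · A^ψ ⊆ A^{χ+ψ}. Suppose there exist d ∈ ℤ_{>0} and χ ∈ M such that dim A^χ > dim A^{dχ}. Then there exists a nonzero element ε ∈ A with ε^d = 0. -/
/-- If `d`-th powers vanish only at `0` and `2 ≤ d`, then the ring has no nonzero
nilpotents (descent on the order of nilpotency). -/
lemma aux_no_nilpotent {A : Type*} [CommRing A] {d : ℕ} (hd : 2 ≤ d)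
    (h : ∀ ε : A, ε ^ d = 0 → ε = 0) :
    ∀ (n : ℕ) (x : A), x ^ n = 0 → x = 0 := by
  intro n
  induction n using Nat.strong_induction_on with
  | _ n ih =>
    intro x hx
    match n, hx with
    | 0, hx =>
      have h1 : (1 : A) = 0 := by simpa using hx
      calc x = x * 1 := (mul_one x).symm
        _ = 0 := by rw [h1, mul_zero]
    | 1, hx => simpa using hx
    | (n + 2), hx =>
      refine ih (n + 1) (by omega) x (h _ ?_)
      rw [← pow_mul]
      have hle : n + 2 ≤ (n + 1) * d := by nlinarith
      calc x ^ ((n + 1) * d) = x ^ (n + 2) * x ^ ((n + 1) * d - (n + 2)) := by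
            rw [← pow_add]; congr 1; omega
        _ = 0 := by rw [hx, zero_mul]

/-- A finite-dimensional commutative unital ℂ-algebra graded by an abelian group `M`;
if some graded piece `𝒜 χ` has larger dimension than `𝒜 (d • χ)` for some `d > 0`,
then there is a nonzero element `ε` with `ε ^ d = 0`. -/
theorem stmt0 (A : Type*) [CommRing A] [Algebra ℂ A] [FiniteDimensional ℂ A]
    (M : Type*) [AddCommGroup M] [DecidableEq M]
    (𝒜 : M → Submodule ℂ A)
    (hdecomp : DirectSum.IsInternal 𝒜)
    (hone : (1 : A) ∈ 𝒜 0)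
    (hmul : ∀ (χ ψ : M) (a b : A), a ∈ 𝒜 χ → b ∈ 𝒜 ψ → a * b ∈ 𝒜 (χ + ψ))
    (d : ℕ) (hd : 0 < d) (χ : M)
    (hdim : Module.finrank ℂ (𝒜 (d • χ)) < Module.finrank ℂ (𝒜 χ)) :
    ∃ ε : A, ε ≠ 0 ∧ ε ^ d = 0 := by
  classical
  by_contra hcon
  push_neg at hcon
  have h0 : ∀ x : A, x ^ d = 0 → x = 0 := fun x hx => by
    by_contra hne; exact hcon x hne hx
  -- the case d = 1 is absurd
  rcases Nat.lt_or_ge d 2 with hd1 | hd2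
  · interval_cases d
    · rw [show (1 : ℕ) • χ = χ from one_nsmul χ] at hdim
      exact lt_irrefl _ hdim
  -- now 2 ≤ d : no nonzero nilpotents
  have hnil : ∀ x : A, IsNilpotent x → x = 0 := by
    rintro x ⟨n, hn⟩
    exact aux_no_nilpotent hd2 h0 n x hn
  have hart : IsArtinianRing A := IsArtinianRing.of_finite ℂ A
  -- elements in every maximal ideal are zero
  have hjac : ∀ x : A, (∀ m : Ideal A, m.IsMaximal → x ∈ m) → x = 0 := by
    intro x hx
    obtain ⟨k, hk⟩ := IsArtinianRing.isNilpotent_jacobson_bot (R := A)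
    have hxj : x ∈ Ideal.jacobson (⊥ : Ideal A) := by
      rw [Ideal.jacobson, Ideal.mem_sInf]
      intro J hJ
      exact hx J hJ.2
    refine hnil x ⟨k, ?_⟩
    have := Ideal.pow_mem_pow hxj k
    rw [hk] at this
    simpa using this
  -- powers stay in graded pieces
  have pow_mem : ∀ (n : ℕ) (a : A), a ∈ 𝒜 χ → a ^ n ∈ 𝒜 (n • χ) := by
    intro n a ha
    induction n with
    | zero => simpa using hone
    | succ n ihn =>
      have := hmul (n • χ) χ _ _ ihn ha
      rwa [← pow_succ, ← succ_nsmul] at this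
  set V : Submodule ℂ A := 𝒜 χ with hV
  -- bad maximal ideals: those not containing V
  have hfin : Set.Finite {I : Ideal A | I.IsMaximal ∧ ¬ ∀ x ∈ V, x ∈ I} :=
    (IsArtinianRing.setOfPred_isMaximal_finite A).subset fun I hI => hI.1
  let p : Ideal A → Subspace ℂ V := fun m =>
    Submodule.comap V.subtype (Submodule.restrictScalars ℂ m)
  let s : Finset (Subspace ℂ V) := hfin.toFinset.image p
  have hs : ⊤ ∉ s := by
    intro hmem
    simp only [s, Finset.mem_image, Set.Finite.mem_toFinset] at hmem
    obtain ⟨m, hm, hpm⟩ := hmem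
    refine hm.2 fun x hx => ?_
    have : (⟨x, hx⟩ : V) ∈ p m := by rw [hpm]; trivial
    exact this
  have hcover := Subspace.biUnion_ne_univ_of_top_notMem hs
  obtain ⟨v, hv⟩ := Set.ne_univ_iff_exists_notMem _ |>.mp hcover
  have hvnot : ∀ m : Ideal A, m.IsMaximal → ¬(∀ x ∈ V, x ∈ m) → (v : A) ∉ m := by
    intro m hm hVm hvm
    apply hv
    have hms : p m ∈ s := by
      simp only [s, Finset.mem_image, Set.Finite.mem_toFinset]
      exact ⟨m, ⟨hm, hVm⟩, rfl⟩
    exact Set.mem_biUnion hms (show v ∈ p m from hvm)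
  -- multiplication by v^(d-1) maps V injectively into 𝒜 (d • χ)
  have hvpow : (v : A) ^ (d - 1) ∈ 𝒜 ((d - 1) • χ) := pow_mem _ _ v.2
  have hmem : ∀ u : V, (v : A) ^ (d - 1) * (u : A) ∈ 𝒜 (d • χ) := by
    intro u
    have := hmul ((d - 1) • χ) χ _ _ hvpow u.2
    have heq : (d - 1) • χ + χ = d • χ := by
      rw [← succ_nsmul]; congr 1; omega
    rwa [heq] at this
  let f : V →ₗ[ℂ] (𝒜 (d • χ)) :=
    LinearMap.codRestrict (𝒜 (d • χ))
      ((LinearMap.mulLeft ℂ ((v : A) ^ (d - 1))).comp V.subtype) hmem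
  have hinj : Function.Injective f := by
    rw [injective_iff_map_eq_zero]
    intro u hu
    have hu' : (v : A) ^ (d - 1) * (u : A) = 0 := by
      have := congrArg (Subtype.val) hu
      exact this
    have huA : (u : A) = 0 := by
      apply hjac
      intro m hm
      by_cases hVm : ∀ x ∈ V, x ∈ m
      · exact hVm _ u.2
      · have hvm := hvnot m hm hVm
        haveI := hm
        letI : Field (A ⧸ m) := Ideal.Quotient.field m
        have hq : (Ideal.Quotient.mk m (v : A)) ^ (d - 1) *
            Ideal.Quotient.mk m (u : A) = 0 := by
          rw [← map_pow, ← map_mul, hu', map_zero]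
        have hvq : Ideal.Quotient.mk m (v : A) ≠ 0 := by
          rwa [Ne, Ideal.Quotient.eq_zero_iff_mem]
        rcases mul_eq_zero.mp hq with h | h
        · exact absurd (pow_eq_zero_iff (by omega : d - 1 ≠ 0) |>.mp h) hvq
        · rwa [Ideal.Quotient.eq_zero_iff_mem] at h
    exact Subtype.ext huA
  have := LinearMap.finrank_le_finrank_of_injective hinj
  omega
end

section
/- Let A be a finite-dimensional commutative unital ℂ-algebra, m a positive integer, and α ∈ A an element such that multiplication by α is an invertible linear operator on A. Then A is semisimple (i.e. has no nonzero nilpotent elements) if and only if A[y]/(y^m − α) is semisimple. -/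
open Polynomial in
/-- For a finite-dimensional commutative unital ℂ-algebra `A`, `m > 0`, and `α ∈ A`
with multiplication by `α` invertible, `A` is semisimple (no nonzero nilpotents)
iff `A[y]/(y^m - α)` is semisimple. -/
theorem stmt1 (A : Type*) [CommRing A] [Algebra ℂ A] [FiniteDimensional ℂ A]
    (m : ℕ) (hm : 0 < m) (α : A)
    (hα : Function.Bijective (fun x : A => α * x)) :
    (∀ a : A, IsNilpotent a → a = 0) ↔
      (∀ b : Polynomial A ⧸ Ideal.span {(X : Polynomial A) ^ m - C α},
        IsNilpotent b → b = 0) := by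
  rcases subsingleton_or_nontrivial A with hA | hA
  · haveI : Subsingleton (Polynomial A ⧸ Ideal.span {(X : Polynomial A) ^ m - C α}) :=
      Function.Surjective.subsingleton Ideal.Quotient.mk_surjective
    exact ⟨fun _ b _ => Subsingleton.elim b 0, fun _ a _ => Subsingleton.elim a 0⟩
  set g : Polynomial A := X ^ m - C α with hgdef
  set I : Ideal (Polynomial A) := Ideal.span {g} with hIdef
  have hgm : g.Monic := monic_X_pow_sub_C α hm.ne'
  have hdeg : g.degree = m := degree_X_pow_sub_C hm α
  obtain ⟨x, hx⟩ := hα.2 1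
  have hx' : α * x = 1 := hx
  haveI : IsArtinianRing A := isArtinian_of_tower ℂ inferInstance
  constructor
  · intro hA' b hb
    obtain ⟨f, rfl⟩ := Ideal.Quotient.mk_surjective b
    set r := f %ₘ g with hrdef
    have hmk : Ideal.Quotient.mk I f = Ideal.Quotient.mk I r := by
      conv_lhs => rw [← modByMonic_add_div f g]
      rw [map_add]
      have : Ideal.Quotient.mk I (g * (f /ₘ g)) = 0 := by
        rw [Ideal.Quotient.eq_zero_iff_mem]
        exact Ideal.mul_mem_right _ _ (Ideal.subset_span rfl)
      rw [this, add_zero]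
    obtain ⟨k, hk⟩ := hb
    have hrk : r ^ k ∈ I := by
      rw [← Ideal.Quotient.eq_zero_iff_mem, map_pow, ← hmk]
      exact hk
    have hcoeff : ∀ n (p : Ideal A), p.IsPrime → r.coeff n ∈ p := by
      intro n p hp
      haveI := hp
      haveI : p.IsMaximal := IsArtinianRing.isMaximal_of_isPrime p
      letI : Field (A ⧸ p) := Ideal.Quotient.field p
      set φ := Ideal.Quotient.mk p with hφ
      haveI : CharZero (A ⧸ p) :=
        charZero_of_injective_algebraMap (algebraMap ℂ (A ⧸ p)).injective
      have hα' : φ α ≠ 0 := by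
        intro h
        have h2 := congrArg φ hx'
        rw [map_mul, h, zero_mul, map_one] at h2
        exact one_ne_zero h2.symm
      have hsep : Separable (X ^ m - C (φ α)) :=
        separable_X_pow_sub_C (φ α) (by exact_mod_cast hm.ne') hα'
      have hsq : Squarefree ((X : Polynomial (A ⧸ p)) ^ m - C (φ α)) := hsep.squarefree
      have hdvd : ((X : Polynomial (A ⧸ p)) ^ m - C (φ α)) ∣ (r.map φ) ^ k := by
        obtain ⟨c, hc⟩ := Ideal.mem_span_singleton.mp hrk
        refine ⟨c.map φ, ?_⟩
        have h3 := congrArg (Polynomial.map φ) hc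
        simpa [Polynomial.map_mul, Polynomial.map_pow, Polynomial.map_sub,
          Polynomial.map_C, Polynomial.map_X, hgdef] using h3
      have hdvd' : ((X : Polynomial (A ⧸ p)) ^ m - C (φ α)) ∣ r.map φ :=
        hsq.isRadical k _ hdvd
      have hr0 : r.map φ = 0 := by
        by_contra h
        have h1 := degree_le_of_dvd hdvd' h
        rw [degree_X_pow_sub_C hm (φ α)] at h1
        have h2 : (r.map φ).degree ≤ r.degree := degree_map_le
        have h3 : r.degree < g.degree := degree_modByMonic_lt f hgm
        rw [hdeg] at h3
        exact lt_irrefl _ (lt_of_le_of_lt (h1.trans h2) h3)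
      have h4 := congrArg (fun q => Polynomial.coeff q n) hr0
      simp only [coeff_map, coeff_zero] at h4
      exact Ideal.Quotient.eq_zero_iff_mem.mp h4
    have hr00 : r = 0 := by
      ext n
      rw [coeff_zero]
      exact hA' _ (nilpotent_iff_mem_prime.mpr (fun J hJ => hcoeff n J hJ))
    rw [hmk, hr00, map_zero]
  · intro hB a ha
    have hnil : IsNilpotent (Ideal.Quotient.mk I (C a)) :=
      (ha.map (C : A →+* Polynomial A)).map (Ideal.Quotient.mk I)
    have h0 := hB _ hnil
    rw [Ideal.Quotient.eq_zero_iff_mem, Ideal.mem_span_singleton] at h0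
    obtain ⟨q, hq⟩ := h0
    rcases eq_or_ne q 0 with rfl | hq0
    · rw [mul_zero] at hq
      exact C_eq_zero.mp hq
    · exfalso
      have hdq : (C a).degree = q.degree + g.degree := by
        rw [hq, mul_comm, hgm.degree_mul, add_comm]
      have hge : (m : WithBot ℕ) ≤ (C a).degree := by
        rw [hdq, hdeg]
        calc (m : WithBot ℕ) = 0 + m := (zero_add _).symm
          _ ≤ q.degree + m :=
            add_le_add_left (zero_le_degree_iff.mpr hq0) _
      have : (m : WithBot ℕ) ≤ 0 := hge.trans degree_C_le
      exact absurd this (by exact_mod_cast hm.not_ge)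
end

section
/- Let X = SG(2, 2n) with n ≥ 3, having Fano index r = 2n−1, dimension 4n−5, and Betti numbers b_{2i} = (i+2)/2 for even i, (i+1)/2 for odd i (for 0 ≤ i ≤ 4n−5, with Poincaré duality b_{2i} = b_{2(4n−5−i)}). Then the index-periodic Betti numbers satisfy b̃_{2̄} = n ≠ n−1 = b̃_{−2̄}, where b̃_{ī} = Σ_{j ≡ i mod r} b_{2j}. -/
/-- The Betti numbers `b_{2i}` of `X = SG(2, 2n)`: for `0 ≤ i ≤ 2n-3` given by the
formula `(i+2)/2` (`i` even), `(i+1)/2` (`i` odd); extended by Poincaré duality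
`b_{2i} = b_{2(4n-5-i)}` for `i ≤ 4n-5 = dim X`; zero otherwise. -/
def sgBetti (n i : ℕ) : ℕ :=
  if i ≤ 2 * n - 3 then (if Even i then (i + 2) / 2 else (i + 1) / 2)
  else if i ≤ 4 * n - 5 then
    (if Even (4 * n - 5 - i) then (4 * n - 5 - i + 2) / 2 else (4 * n - 5 - i + 1) / 2)
  else 0

/-- If `j < 4n-4` and `j ≡ m [MOD 2n-1]` with `m < 2n-1`, then `j = m` or `j = m + (2n-1)`. -/
lemma sg_modcase (n j m : ℕ) (hn : 3 ≤ n) (hj : j < 4 * n - 4) (h : j % (2 * n - 1) = m)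
    (hm : m < 2 * n - 1) : j = m ∨ j = m + (2 * n - 1) := by
  have heq := Nat.div_add_mod j (2 * n - 1)
  have hd : j / (2 * n - 1) ≤ 1 := by
    by_contra hc
    push_neg at hc
    have := Nat.le_div_iff_mul_le (by omega : 0 < 2 * n - 1) |>.mp hc
    omega
  interval_cases hd : j / (2 * n - 1) <;> omega

/-- For `X = SG(2, 2n)` (`n ≥ 3`), with Fano index `r = 2n - 1` and dimension `4n - 5`,
the index-periodic Betti numbers satisfy `b̃_{2̄} = n ≠ n - 1 = b̃_{-2̄}` (the residue
`-2` modulo `r` being `2n - 3`). -/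
theorem stmt14 (n : ℕ) (hn : 3 ≤ n) :
    (∑ j ∈ (Finset.range (4 * n - 4)).filter (fun j => j % (2 * n - 1) = 2),
        sgBetti n j) = n ∧
    (∑ j ∈ (Finset.range (4 * n - 4)).filter (fun j => j % (2 * n - 1) = 2 * n - 3),
        sgBetti n j) = n - 1 ∧
    n ≠ n - 1 := by
  have b2 : sgBetti n 2 = 2 := by
    simp only [sgBetti]
    rw [if_pos (by omega), if_pos (by decide)]
  have b2n1 : sgBetti n (2 * n + 1) = n - 2 := by
    simp only [sgBetti]
    rw [if_neg (by omega), if_pos (by omega), if_pos ⟨n - 3, by omega⟩]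
    omega
  have b2n3 : sgBetti n (2 * n - 3) = n - 1 := by
    simp only [sgBetti]
    rw [if_pos le_rfl, if_neg (by rintro ⟨k, hk⟩; omega)]
    omega
  have hS1 : (Finset.range (4 * n - 4)).filter (fun j => j % (2 * n - 1) = 2)
      = {2, 2 * n + 1} := by
    ext j
    simp only [Finset.mem_filter, Finset.mem_range, Finset.mem_insert, Finset.mem_singleton]
    constructor
    · rintro ⟨h1, h2⟩
      rcases sg_modcase n j 2 hn h1 h2 (by omega) with h | h <;> omega
    · rintro (rfl | rfl)
      · exact ⟨by omega, Nat.mod_eq_of_lt (by omega)⟩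
      · refine ⟨by omega, ?_⟩
        rw [show 2 * n + 1 = (2 * n - 1) + 2 by omega, Nat.add_mod_left]
        exact Nat.mod_eq_of_lt (by omega)
  have hS2 : (Finset.range (4 * n - 4)).filter (fun j => j % (2 * n - 1) = 2 * n - 3)
      = {2 * n - 3} := by
    ext j
    simp only [Finset.mem_filter, Finset.mem_range, Finset.mem_singleton]
    constructor
    · rintro ⟨h1, h2⟩
      rcases sg_modcase n j (2 * n - 3) hn h1 h2 (by omega) with h | h <;> omega
    · rintro rfl
      exact ⟨by omega, Nat.mod_eq_of_lt (by omega)⟩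
  refine ⟨?_, ?_, by omega⟩
  · rw [hS1, Finset.sum_insert (by simp only [Finset.mem_singleton]; omega),
      Finset.sum_singleton, b2, b2n1]
    omega
  · rw [hS2, Finset.sum_singleton, b2n3]
end

section
/- Let A = ⊕_{i ∈ ℤ_r} A^ī be a finite-dimensional commutative unital ℂ-algebra graded by ℤ/rℤ. If A has no nonzero nilpotent elements, then dim A^ī ≤ dim A^{d·ī} for all integers i and d ≥ 1, and consequently dim A^ī = dim A^{−ī} for all i. -/
/-- Let `A = ⊕_{i ∈ ℤ/r} A^i` be a finite-dimensional commutative unital ℂ-algebra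
graded by `ℤ/rℤ`. If `A` has no nonzero nilpotent elements, then
`dim A^i ≤ dim A^{d·i}` for all `i` and all `d ≥ 1`, and consequently
`dim A^i = dim A^{-i}` for all `i`. -/
theorem stmt19 (r : ℕ) (hr : 0 < r)
    (A : Type*) [CommRing A] [Algebra ℂ A] [FiniteDimensional ℂ A]
    (𝒜 : ZMod r → Submodule ℂ A)
    (hdecomp : DirectSum.IsInternal 𝒜)
    (hone : (1 : A) ∈ 𝒜 0)
    (hmul : ∀ (i j : ZMod r) (a b : A), a ∈ 𝒜 i → b ∈ 𝒜 j → a * b ∈ 𝒜 (i + j))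
    (hred : ∀ a : A, IsNilpotent a → a = 0) :
    (∀ (i : ZMod r) (d : ℕ), 1 ≤ d →
      Module.finrank ℂ (𝒜 i) ≤ Module.finrank ℂ (𝒜 (d • i))) ∧
    (∀ i : ZMod r, Module.finrank ℂ (𝒜 i) = Module.finrank ℂ (𝒜 (-i))) := by
  haveI : NeZero r := ⟨hr.ne'⟩
  haveI : GradedRing 𝒜 :=
    { hdecomp.chooseDecomposition with
      one_mem := hone
      mul_mem := fun {i j a b} ha hb => hmul i j a b ha hb }
  have part1 : ∀ (i : ZMod r) (d : ℕ), 1 ≤ d →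
      Module.finrank ℂ (𝒜 i) ≤ Module.finrank ℂ (𝒜 (d • i)) := by
    intro i d hd
    -- rank of the multiplication operator
    set rk : A → ℕ :=
      fun a => Module.finrank ℂ (LinearMap.range (LinearMap.mulLeft ℂ a)) with hrk
    -- choose `u ∈ 𝒜 i` of maximal rank
    have hbdd : BddAbove (rk '' (𝒜 i : Set A)) := by
      refine ⟨Module.finrank ℂ A, ?_⟩
      rintro _ ⟨a, _, rfl⟩
      exact Submodule.finrank_le _
    have hne : (rk '' (𝒜 i : Set A)).Nonempty :=
      ⟨rk 0, 0, (𝒜 i).zero_mem, rfl⟩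
    obtain ⟨u, hu_mem, hu_sup⟩ := Nat.sSup_mem hne hbdd
    have hmax : ∀ v ∈ 𝒜 i, rk v ≤ rk u := by
      intro v hv
      rw [hu_sup]
      exact le_csSup hbdd ⟨v, hv, rfl⟩
    -- `Ann(u²) = Ann(u)`, hence `u ∈ u²A`
    have hker2 : LinearMap.ker (LinearMap.mulLeft ℂ (u * u)) =
        LinearMap.ker (LinearMap.mulLeft ℂ u) := by
      ext z
      simp only [LinearMap.mem_ker, LinearMap.mulLeft_apply]
      constructor
      · intro h
        refine hred (u * z) ⟨2, ?_⟩
        have h2 : (u * z) ^ 2 = z * (u * u * z) := by ring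
        rw [h2, h, mul_zero]
      · intro h
        have h2 : u * u * z = u * (u * z) := by ring
        rw [h2, h, mul_zero]
    have hrange2 : LinearMap.range (LinearMap.mulLeft ℂ (u * u)) =
        LinearMap.range (LinearMap.mulLeft ℂ u) := by
      apply Submodule.eq_of_le_of_finrank_le
      · rintro _ ⟨w, rfl⟩
        exact ⟨u * w, by simp only [LinearMap.mulLeft_apply]; ring⟩
      · have h1 := LinearMap.finrank_range_add_finrank_ker (LinearMap.mulLeft ℂ (u * u))
        have h2 := LinearMap.finrank_range_add_finrank_ker (LinearMap.mulLeft ℂ u)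
        rw [hker2] at h1
        omega
    have humem2 : u ∈ LinearMap.range (LinearMap.mulLeft ℂ (u * u)) := by
      rw [hrange2]
      exact ⟨1, by simp [LinearMap.mulLeft_apply]⟩
    obtain ⟨w, hw⟩ := humem2
    rw [LinearMap.mulLeft_apply] at hw
    -- the degree-zero support idempotent
    set e : A := (DirectSum.decompose 𝒜 (u * w) 0 : A) with he_def
    have he_mem : e ∈ 𝒜 0 := SetLike.coe_mem _
    have hEu : (u * w) * u = u := by
      calc (u * w) * u = u * u * w := by ring
        _ = u := hw
    have he_form : e = u * (DirectSum.decompose 𝒜 w (-i) : A) := by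
      have h := DirectSum.coe_decompose_mul_add_of_left_mem (𝒜 := 𝒜)
        (j := -i) hu_mem (b := w)
      rw [add_neg_cancel] at h
      rw [he_def]
      exact h
    have he_u : e * u = u := by
      have h := DirectSum.coe_decompose_mul_add_of_right_mem (𝒜 := 𝒜)
        (i := (0 : ZMod r)) hu_mem (a := u * w)
      rw [zero_add, hEu, DirectSum.decompose_of_mem_same 𝒜 hu_mem] at h
      rw [he_def]
      exact h.symm
    set w0 : A := (DirectSum.decompose 𝒜 w (-i) : A) with hw0
    have he_sq : e * e = e := by
      calc e * e = w0 * (e * u) := by rw [he_form]; ring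
        _ = w0 * u := by rw [he_u]
        _ = e := by rw [he_form]; ring
    -- key maximality consequence
    have hkey : ∀ x ∈ 𝒜 i, ∀ z : A, z * u = 0 → z * (x - e * x) = 0 := by
      intro x hx z hz
      have hy_mem : x - e * x ∈ 𝒜 i := by
        refine sub_mem hx ?_
        have := hmul 0 i e x he_mem hx
        rwa [zero_add] at this
      have hye : (x - e * x) * e = 0 := by
        have h1 : (x - e * x) * e = x * e - (e * e) * x := by ring
        rw [h1, he_sq]; ring
      have hkv : LinearMap.ker (LinearMap.mulLeft ℂ (u + (x - e * x))) =
          LinearMap.ker (LinearMap.mulLeft ℂ u) ⊓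
            LinearMap.ker (LinearMap.mulLeft ℂ (x - e * x)) := by
        ext z'
        simp only [LinearMap.mem_ker, LinearMap.mulLeft_apply, Submodule.mem_inf]
        constructor
        · intro h
          have h1 : u * z' = 0 := by
            have h2 : ((u + (x - e * x)) * z') * e = 0 := by rw [h, zero_mul]
            have h3 : ((u + (x - e * x)) * z') * e
                = z' * (e * u) + z' * ((x - e * x) * e) := by ring
            rw [h3, hye, he_u, mul_zero, add_zero] at h2
            rw [mul_comm]
            exact h2
          refine ⟨h1, ?_⟩
          have h4 : (u + (x - e * x)) * z' = u * z' + (x - e * x) * z' := by ring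
          rw [h4, h1, zero_add] at h
          exact h
        · rintro ⟨h1, h2⟩
          rw [add_mul, h1, h2, add_zero]
      have hvrk : rk (u + (x - e * x)) ≤ rk u := hmax _ (add_mem hu_mem hy_mem)
      have hker_le : Module.finrank ℂ (LinearMap.ker (LinearMap.mulLeft ℂ u)) ≤
          Module.finrank ℂ (LinearMap.ker (LinearMap.mulLeft ℂ (u + (x - e * x)))) := by
        have h1 := LinearMap.finrank_range_add_finrank_ker
          (LinearMap.mulLeft ℂ (u + (x - e * x)))
        have h2 := LinearMap.finrank_range_add_finrank_ker (LinearMap.mulLeft ℂ u)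
        simp only [hrk] at hvrk
        omega
      have hker_eq : LinearMap.ker (LinearMap.mulLeft ℂ (u + (x - e * x))) =
          LinearMap.ker (LinearMap.mulLeft ℂ u) := by
        apply Submodule.eq_of_le_of_finrank_le
        · rw [hkv]; exact inf_le_left
        · exact hker_le
      have hle : LinearMap.ker (LinearMap.mulLeft ℂ u) ≤
          LinearMap.ker (LinearMap.mulLeft ℂ (x - e * x)) := by
        rw [← hker_eq, hkv]; exact inf_le_right
      have hmem := hle (show z ∈ LinearMap.ker (LinearMap.mulLeft ℂ u) by
        rw [LinearMap.mem_ker, LinearMap.mulLeft_apply, mul_comm]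
        exact hz)
      rw [LinearMap.mem_ker, LinearMap.mulLeft_apply] at hmem
      rw [mul_comm]
      exact hmem
    -- injectivity of multiplication by u on 𝒜 i
    have hF : ∀ x ∈ 𝒜 i, u * x = 0 → x = 0 := by
      intro x hx hux
      have hex : e * x = 0 := by
        rw [he_form]
        have : u * w0 * x = w0 * (u * x) := by ring
        rw [this, hux, mul_zero]
      have h2 := hkey x hx x (by rw [mul_comm]; exact hux)

      have hxx : x * x = 0 := by
        have h3 : x * (x - e * x) = x * x - x * (e * x) := by ring
        rw [h3, hex, mul_zero, sub_zero] at h2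
        exact h2
      exact hred x ⟨2, by rw [pow_two]; exact hxx⟩
    -- powers of u are homogeneous
    have hupow : ∀ m : ℕ, u ^ m ∈ 𝒜 (m • i) := by
      intro m
      induction m with
      | zero => simpa using hone
      | succ m ih =>
        have := hmul (m • i) i _ _ ih hu_mem
        rw [succ_nsmul]
        simpa [pow_succ] using this
    have hmem2 : ∀ x ∈ (𝒜 i), (LinearMap.mulLeft ℂ (u ^ (d - 1))) x ∈ 𝒜 (d • i) := by
      intro x hx
      have h := hmul ((d - 1) • i) i _ _ (hupow (d - 1)) hx
      have hdi : (d - 1) • i + i = d • i := by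
        rw [← succ_nsmul]
        congr 1
        omega
      rw [hdi] at h
      simpa [LinearMap.mulLeft_apply] using h
    set φ : (𝒜 i) →ₗ[ℂ] (𝒜 (d • i)) :=
      (LinearMap.mulLeft ℂ (u ^ (d - 1))).restrict hmem2 with hφ
    have hker : ∀ x : 𝒜 i, φ x = 0 → x = 0 := by
      rintro ⟨x, hx⟩ hφ0
      have hx0 : u ^ (d - 1) * x = 0 := by
        have := congrArg Subtype.val hφ0
        simpa [hφ, LinearMap.restrict_apply] using this
      have hx' : x = 0 := by
        by_cases hd1 : d = 1
        · subst hd1; simpa using hx0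
        · have hd2 : 2 ≤ d := by omega
          have hux : u * x = 0 := by
            refine hred (u * x) ⟨d - 1, ?_⟩
            have hxp : x ^ (d - 1) = x * x ^ (d - 2) := by
              rw [← pow_succ']
              congr 1
              omega
            have : (u * x) ^ (d - 1) = (u ^ (d - 1) * x) * x ^ (d - 2) := by
              rw [mul_pow, hxp]; ring
            rw [this, hx0, zero_mul]
          exact hF x hx hux
      exact Subtype.ext hx'
    have hinj : Function.Injective φ := by
      intro a b hab
      have := hker (a - b) (by rw [map_sub, hab, sub_self])
      exact sub_eq_zero.mp this
    exact LinearMap.finrank_le_finrank_of_injective hinj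
  refine ⟨part1, fun i => ?_⟩
  rcases Nat.lt_or_ge r 2 with h2 | h2
  · have hr1 : r = 1 := by omega
    subst hr1
    have : -i = i := Subsingleton.elim _ _
    rw [this]
  · have hcast : ((r - 1 : ℕ) : ZMod r) = -1 := by
      rw [Nat.cast_sub (by omega : 1 ≤ r)]
      simp
    have e1 : (r - 1) • i = -i := by
      rw [nsmul_eq_mul, hcast]; ring
    have e2 : (r - 1) • (-i) = i := by
      rw [nsmul_eq_mul, hcast]; ring
    have h1 := part1 i (r - 1) (by omega)
    rw [e1] at h1
    have h1' := part1 (-i) (r - 1) (by omega)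
    rw [e2] at h1'
    exact le_antisymm h1 h1'
end
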